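/- arXiv:1307.6127 — 2 statements merged into one kernel-verified Lean document; each statement's English description precedes it below -/
import Mathlib

section
/- Let ℓ¹,…,ℓᴺ be strictly positive numbers, not all equal, and for φ > 0 define normalized weights Wʲ(φ) = (ℓʲ)^φ / ∑_{s=1}^N (ℓˢ)^φ and ESS(φ) = (∑_j Wʲ(φ)²)^{-1}. Then ESS(φ) is strictly decreasing in φ on (0,∞), with lim_{φ→0⁺} ESS(φ) = N. -/
open Real

private lemma lagrange_aux {N : ℕ} (u v : Fin N → ℝ) :
    (∑ i, u i ^ 2) * (∑ i, v i ^ 2) - (∑ i, u i * v i) ^ 2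
      = (∑ i, ∑ j, (u i * v j - u j * v i) ^ 2) / 2 := by
  have h1 : (∑ i, u i ^ 2) * (∑ i, v i ^ 2) = ∑ i, ∑ j, u i ^ 2 * v j ^ 2 :=
    Finset.sum_mul_sum _ _ _ _
  have h2 : (∑ i, u i * v i) ^ 2 = ∑ i, ∑ j, (u i * v i) * (u j * v j) := by
    rw [sq]; exact Finset.sum_mul_sum _ _ _ _
  have h4 : (∑ i, ∑ j, u j ^ 2 * v i ^ 2) = ∑ i, ∑ j, u i ^ 2 * v j ^ 2 :=
    Finset.sum_comm
  have h3 : (∑ i, ∑ j, (u i * v j - u j * v i) ^ 2)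
      = (∑ i, ∑ j, u i ^ 2 * v j ^ 2) + (∑ i, ∑ j, u j ^ 2 * v i ^ 2)
        - 2 * ∑ i, ∑ j, (u i * v i) * (u j * v j) := by
    have e : ∀ i j : Fin N, (u i * v j - u j * v i) ^ 2
        = u i ^ 2 * v j ^ 2 + u j ^ 2 * v i ^ 2 - 2 * ((u i * v i) * (u j * v j)) := by
      intro i j; ring
    simp_rw [e, Finset.sum_sub_distrib, Finset.sum_add_distrib, ← Finset.mul_sum]
  rw [h1, h2, h3, h4]; ring

private lemma strict_cs {N : ℕ} (u v : Fin N → ℝ) {i0 j0 : Fin N}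
    (h : u i0 * v j0 ≠ u j0 * v i0) :
    (∑ i, u i * v i) ^ 2 < (∑ i, u i ^ 2) * (∑ i, v i ^ 2) := by
  have hterm : 0 < (u i0 * v j0 - u j0 * v i0) ^ 2 := by
    have := sub_ne_zero.mpr h
    positivity
  have hpos : 0 < (∑ i, ∑ j, (u i * v j - u j * v i) ^ 2) / 2 := by
    apply div_pos ?_ two_pos
    refine Finset.sum_pos' (fun i _ => Finset.sum_nonneg fun j _ => sq_nonneg _) ?_
    exact ⟨i0, Finset.mem_univ _,
      Finset.sum_pos' (fun j _ => sq_nonneg _) ⟨j0, Finset.mem_univ _, hterm⟩⟩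
  linarith [lagrange_aux u v]

private lemma key_convex {N : ℕ} (c : Fin N → ℝ) (i0 j0 : Fin N) (hc : c i0 ≠ c j0) :
    StrictConvexOn ℝ Set.univ (fun φ : ℝ => Real.log (∑ j, Real.exp (c j * φ))) := by
  haveI : Nonempty (Fin N) := ⟨i0⟩
  have hSpos : ∀ φ : ℝ, 0 < ∑ j, Real.exp (c j * φ) := fun φ =>
    Finset.sum_pos (fun j _ => Real.exp_pos _) Finset.univ_nonempty
  have hS' : ∀ φ : ℝ, HasDerivAt (fun φ : ℝ => ∑ j, Real.exp (c j * φ))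
      (∑ j, c j * Real.exp (c j * φ)) φ := by
    intro φ
    apply HasDerivAt.fun_sum
    intro j _
    have h := ((hasDerivAt_id φ).const_mul (c j)).exp
    simpa [mul_comm] using h
  have hS1' : ∀ φ : ℝ, HasDerivAt (fun φ : ℝ => ∑ j, c j * Real.exp (c j * φ))
      (∑ j, c j ^ 2 * Real.exp (c j * φ)) φ := by
    intro φ
    apply HasDerivAt.fun_sum
    intro j _
    have h := (((hasDerivAt_id φ).const_mul (c j)).exp).const_mul (c j)
    simpa [id_eq, sq, mul_comm, mul_assoc, mul_left_comm] using h
  have hg' : ∀ φ : ℝ, HasDerivAt (fun φ : ℝ => Real.log (∑ j, Real.exp (c j * φ)))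
      ((∑ j, c j * Real.exp (c j * φ)) / (∑ j, Real.exp (c j * φ))) φ := fun φ =>
    (hS' φ).log (hSpos φ).ne'
  have hderiv : deriv (fun φ : ℝ => Real.log (∑ j, Real.exp (c j * φ)))
      = fun φ => (∑ j, c j * Real.exp (c j * φ)) / (∑ j, Real.exp (c j * φ)) :=
    funext fun φ => (hg' φ).deriv
  apply strictConvexOn_univ_of_deriv2_pos
  · apply Continuous.log
    · exact continuous_finset_sum _ fun j _ => (Real.continuous_exp.comp
        ((continuous_const.mul continuous_id)))
    · exact fun x => (hSpos x).ne'
  · intro φ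
    have hq : HasDerivAt (fun φ : ℝ =>
        (∑ j, c j * Real.exp (c j * φ)) / (∑ j, Real.exp (c j * φ)))
        (((∑ j, c j ^ 2 * Real.exp (c j * φ)) * (∑ j, Real.exp (c j * φ))
          - (∑ j, c j * Real.exp (c j * φ)) * (∑ j, c j * Real.exp (c j * φ)))
          / (∑ j, Real.exp (c j * φ)) ^ 2) φ :=
      (hS1' φ).div (hS' φ) (hSpos φ).ne'
    have h2 : deriv^[2] (fun φ : ℝ => Real.log (∑ j, Real.exp (c j * φ))) φ
        = ((∑ j, c j ^ 2 * Real.exp (c j * φ)) * (∑ j, Real.exp (c j * φ))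
          - (∑ j, c j * Real.exp (c j * φ)) * (∑ j, c j * Real.exp (c j * φ)))
          / (∑ j, Real.exp (c j * φ)) ^ 2 := by
      show deriv (deriv (fun φ : ℝ => Real.log (∑ j, Real.exp (c j * φ)))) φ = _
      rw [hderiv]
      exact hq.deriv
    rw [h2]
    apply div_pos ?_ (by positivity)
    -- Cauchy–Schwarz with u j = c j * exp (c j φ / 2), v j = exp (c j φ / 2)
    set u : Fin N → ℝ := fun j => c j * Real.exp (c j * φ / 2) with hu
    set v : Fin N → ℝ := fun j => Real.exp (c j * φ / 2) with hv
    have hee : ∀ j, Real.exp (c j * φ / 2) ^ 2 = Real.exp (c j * φ) := by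
      intro j; rw [sq, ← Real.exp_add]; congr 1; ring
    have e1 : (∑ j, c j ^ 2 * Real.exp (c j * φ)) = ∑ j, u j ^ 2 := by
      apply Finset.sum_congr rfl; intro j _
      rw [hu]; simp only []; rw [mul_pow, hee]
    have e2 : (∑ j, Real.exp (c j * φ)) = ∑ j, v j ^ 2 := by
      apply Finset.sum_congr rfl; intro j _
      rw [hv]; simp only []; rw [hee]
    have e3 : (∑ j, c j * Real.exp (c j * φ)) = ∑ j, u j * v j := by
      apply Finset.sum_congr rfl; intro j _
      rw [hu, hv]; simp only []; rw [mul_assoc, ← sq, hee]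
    rw [e1, e2, e3, sub_pos, ← sq]
    apply strict_cs u v (i0 := i0) (j0 := j0)
    intro h
    apply hc
    have hE : Real.exp (c i0 * φ / 2) * Real.exp (c j0 * φ / 2) ≠ 0 := by positivity
    have h2' : c i0 * (Real.exp (c i0 * φ / 2) * Real.exp (c j0 * φ / 2))
        = c j0 * (Real.exp (c i0 * φ / 2) * Real.exp (c j0 * φ / 2)) := by
      rw [hu, hv] at h; simp only [] at h; linear_combination h
    exact mul_right_cancel₀ hE h2'

private lemma key_anti {N : ℕ} (c : Fin N → ℝ) (i0 j0 : Fin N) (hc : c i0 ≠ c j0) :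
    StrictAntiOn (fun φ : ℝ =>
      (∑ j, Real.exp (c j * φ)) ^ 2 / (∑ j, Real.exp (c j * (2 * φ)))) (Set.Ioi 0) := by
  haveI : Nonempty (Fin N) := ⟨i0⟩
  have hSpos : ∀ φ : ℝ, 0 < ∑ j, Real.exp (c j * φ) := fun φ =>
    Finset.sum_pos (fun j _ => Real.exp_pos _) Finset.univ_nonempty
  have hconv := key_convex c i0 j0 hc
  intro a ha b hb hab
  have ha0 : (0:ℝ) < a := ha
  have hb0 : (0:ℝ) < b := hb
  simp only []
  rw [div_lt_div_iff₀ (hSpos _) (hSpos _)]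
  have hD : (0:ℝ) < 2 * b - a := by linarith
  set g : ℝ → ℝ := fun φ => Real.log (∑ j, Real.exp (c j * φ)) with hg
  -- convexity inequalities
  have hne1 : a ≠ 2 * b := by intro h; linarith
  have h1 : g b < (b / (2 * b - a)) * g a + ((b - a) / (2 * b - a)) * g (2 * b) := by
    have hp : (0:ℝ) < b / (2 * b - a) := by positivity
    have hq : (0:ℝ) < (b - a) / (2 * b - a) := by
      apply div_pos (by linarith) hD
    have hpq : b / (2 * b - a) + (b - a) / (2 * b - a) = 1 := by
      rw [← add_div, div_eq_one_iff_eq hD.ne']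
      ring
    have := hconv.2 (Set.mem_univ a) (Set.mem_univ (2 * b)) hne1 hp hq hpq
    have hx : (b / (2 * b - a)) • a + ((b - a) / (2 * b - a)) • (2 * b) = b := by
      simp only [smul_eq_mul]; rw [div_mul_eq_mul_div, div_mul_eq_mul_div, ← add_div, div_eq_iff hD.ne']; ring
    rw [hx] at this
    simpa [smul_eq_mul] using this
  have h2 : g (2 * a) < ((2 * b - 2 * a) / (2 * b - a)) * g a
      + (a / (2 * b - a)) * g (2 * b) := by
    have hp : (0:ℝ) < (2 * b - 2 * a) / (2 * b - a) := by
      apply div_pos (by linarith) hD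
    have hq : (0:ℝ) < a / (2 * b - a) := by positivity
    have hpq : (2 * b - 2 * a) / (2 * b - a) + a / (2 * b - a) = 1 := by
      field_simp; ring
    have := hconv.2 (Set.mem_univ a) (Set.mem_univ (2 * b)) hne1 hp hq hpq
    have hx : ((2 * b - 2 * a) / (2 * b - a)) • a + (a / (2 * b - a)) • (2 * b) = 2 * a := by
      simp only [smul_eq_mul]; field_simp; ring
    rw [hx] at this
    simpa [smul_eq_mul] using this
  have e1 : 2 * (b / (2 * b - a)) + (2 * b - 2 * a) / (2 * b - a) = 2 := by
    field_simp; ring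
  have e2 : 2 * ((b - a) / (2 * b - a)) + a / (2 * b - a) = 1 := by
    field_simp; ring
  have hlog : 2 * g b + g (2 * a) < 2 * g a + g (2 * b) := by
    have step : 2 * g b + g (2 * a)
        < (2 * (b / (2 * b - a)) + (2 * b - 2 * a) / (2 * b - a)) * g a
          + (2 * ((b - a) / (2 * b - a)) + a / (2 * b - a)) * g (2 * b) := by
      nlinarith [h1, h2]
    rw [e1, e2] at step
    linarith
  -- exponentiate
  have hmain : Real.log ((∑ j, Real.exp (c j * b)) ^ 2 * ∑ j, Real.exp (c j * (2 * a)))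
      < Real.log ((∑ j, Real.exp (c j * a)) ^ 2 * ∑ j, Real.exp (c j * (2 * b))) := by
    rw [Real.log_mul (by positivity) (hSpos _).ne', Real.log_mul (by positivity) (hSpos _).ne',
      Real.log_pow, Real.log_pow]
    push_cast
    simpa [hg] using hlog
  have := (Real.log_lt_log_iff (by positivity) (by positivity)).mp hmain
  exact this

/-- For strictly positive likelihood values `ℓ¹,…,ℓᴺ`, not all equal, the effective sample
size `ESS(φ) = (∑_j (ℓʲ)^φ/∑_s (ℓˢ)^φ)²)⁻¹` of the tempered weights is strictly decreasing
in `φ` on `(0,∞)`, and `ESS(φ) → N` as `φ → 0⁺`. -/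
theorem ess_strictAnti_and_limit (N : ℕ) (ℓ : Fin N → ℝ) (hpos : ∀ j, 0 < ℓ j)
    (hne : ∃ i j, ℓ i ≠ ℓ j) :
    StrictAntiOn
        (fun φ : ℝ => (∑ j, ((ℓ j) ^ φ / ∑ s, (ℓ s) ^ φ) ^ 2)⁻¹) (Set.Ioi (0:ℝ)) ∧
      Filter.Tendsto (fun φ : ℝ => (∑ j, ((ℓ j) ^ φ / ∑ s, (ℓ s) ^ φ) ^ 2)⁻¹)
        (nhdsWithin 0 (Set.Ioi 0)) (nhds (N : ℝ)) := by
  obtain ⟨i0, j0, hij⟩ := hne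
  haveI : Nonempty (Fin N) := ⟨i0⟩
  have hN : 0 < N := Fin.pos i0
  set c : Fin N → ℝ := fun j => Real.log (ℓ j) with hcdef
  have hc : c i0 ≠ c j0 := by
    intro h
    apply hij
    rw [← Real.exp_log (hpos i0), ← Real.exp_log (hpos j0)]
    simp only [hcdef] at h
    rw [h]
  have hSpos : ∀ φ : ℝ, 0 < ∑ j, Real.exp (c j * φ) := fun φ =>
    Finset.sum_pos (fun j _ => Real.exp_pos _) Finset.univ_nonempty
  have hl : ∀ (j : Fin N) (x : ℝ), ℓ j ^ x = Real.exp (c j * x) := fun j x =>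
    Real.rpow_def_of_pos (hpos j) x
  have hfun : ∀ φ : ℝ, (∑ j, ((ℓ j) ^ φ / ∑ s, (ℓ s) ^ φ) ^ 2)⁻¹
      = (∑ j, Real.exp (c j * φ)) ^ 2 / (∑ j, Real.exp (c j * (2 * φ))) := by
    intro φ
    have hee : ∀ j, Real.exp (c j * φ) ^ 2 = Real.exp (c j * (2 * φ)) := by
      intro j; rw [sq, ← Real.exp_add]; congr 1; ring
    have : (∑ j, ((ℓ j) ^ φ / ∑ s, (ℓ s) ^ φ) ^ 2)
        = (∑ j, Real.exp (c j * (2 * φ))) / (∑ j, Real.exp (c j * φ)) ^ 2 := by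
      simp_rw [hl, div_pow, hee]
      rw [Finset.sum_div]
    rw [this, inv_div]
  have hfe : (fun φ : ℝ => (∑ j, ((ℓ j) ^ φ / ∑ s, (ℓ s) ^ φ) ^ 2)⁻¹)
      = fun φ : ℝ => (∑ j, Real.exp (c j * φ)) ^ 2 / (∑ j, Real.exp (c j * (2 * φ))) :=
    funext hfun
  rw [hfe]
  constructor
  · exact key_anti c i0 j0 hc
  · have hcont : Continuous (fun φ : ℝ =>
        (∑ j, Real.exp (c j * φ)) ^ 2 / (∑ j, Real.exp (c j * (2 * φ)))) := by
      apply Continuous.div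
      · exact (continuous_finset_sum _ fun j _ =>
          Real.continuous_exp.comp (continuous_const.mul continuous_id)).pow 2
      · exact continuous_finset_sum _ fun j _ =>
          Real.continuous_exp.comp (continuous_const.mul (continuous_const.mul continuous_id))
      · exact fun x => (hSpos (2 * x)).ne'
    have hval : (∑ j : Fin N, Real.exp (c j * (0:ℝ))) ^ 2
        / (∑ j : Fin N, Real.exp (c j * (2 * (0:ℝ)))) = (N : ℝ) := by
      simp only [mul_zero, Real.exp_zero, Finset.sum_const, Finset.card_univ,
        Fintype.card_fin, nsmul_eq_mul, mul_one]
      rw [sq]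
      rw [mul_div_assoc, div_self (by exact_mod_cast hN.ne'), mul_one]
    have htend : Filter.Tendsto (fun φ : ℝ =>
        (∑ j, Real.exp (c j * φ)) ^ 2 / (∑ j, Real.exp (c j * (2 * φ))))
        (nhdsWithin 0 (Set.Ioi 0))
        (nhds ((∑ j : Fin N, Real.exp (c j * (0:ℝ))) ^ 2
          / (∑ j : Fin N, Real.exp (c j * (2 * (0:ℝ)))))) :=
      (hcont.tendsto 0).mono_left nhdsWithin_le_nhds
    rw [hval] at htend
    exact htend
end

section
/- Let μ₀ = N(0,C) on ℝᵈ with C positive definite, and let μ be the measure with density dμ/dμ₀(u) ∝ l(u) for a positive bounded measurable function l. Then the Metropolis–Hastings kernel built from the pCN proposal ũ = ρu + √(1-ρ²)N(0,C) with acceptance probability min{1, l(ũ)/l(u)} is reversible with respect to μ, and in particular μ-invariant. -/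
open Real Matrix MeasureTheory ProbabilityTheory
open scoped ENNReal

/-- Gaussian density on `ℝᵈ` with mean `m` and (positive definite) covariance `C`. -/
noncomputable def gaussPdf (d : ℕ) (C : Matrix (Fin d) (Fin d) ℝ) (m x : Fin d → ℝ) : ℝ :=
  Real.exp (-(1 / 2) * ((x - m) ⬝ᵥ (C⁻¹ *ᵥ (x - m)))) /
    Real.sqrt ((2 * Real.pi) ^ d * C.det)

lemma gaussPdf_nonneg (d : ℕ) (M : Matrix (Fin d) (Fin d) ℝ) (m x : Fin d → ℝ) :
    0 ≤ gaussPdf d M m x :=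
  div_nonneg (Real.exp_nonneg _) (Real.sqrt_nonneg _)

lemma continuous_gaussPdf (d : ℕ) (M : Matrix (Fin d) (Fin d) ℝ) :
    Continuous fun p : (Fin d → ℝ) × (Fin d → ℝ) => gaussPdf d M p.1 p.2 := by
  unfold gaussPdf
  apply Continuous.div_const
  apply Real.continuous_exp.comp
  apply Continuous.mul continuous_const
  simp only [dotProduct, Matrix.mulVec, dotProduct]
  apply continuous_finset_sum
  intro i _
  apply Continuous.mul
  · exact ((continuous_apply i).comp continuous_snd).sub ((continuous_apply i).comp continuous_fst)
  · apply continuous_finset_sum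
    intro j _
    exact continuous_const.mul
      (((continuous_apply j).comp continuous_snd).sub ((continuous_apply j).comp continuous_fst))

lemma continuous_gaussPdf' (d : ℕ) (M : Matrix (Fin d) (Fin d) ℝ) {X : Type*}
    [TopologicalSpace X] {m x : X → (Fin d → ℝ)} (hm : Continuous m) (hx : Continuous x) :
    Continuous fun s => gaussPdf d M (m s) (x s) := by
  unfold gaussPdf
  apply Continuous.div_const
  apply Real.continuous_exp.comp
  apply Continuous.mul continuous_const
  simp only [dotProduct, Matrix.mulVec, dotProduct]
  refine continuous_finset_sum _ fun i _ => Continuous.mul ?_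
    (continuous_finset_sum _ fun j _ => Continuous.mul continuous_const ?_)
  · exact ((continuous_apply i).comp (hx.sub hm))
  · exact ((continuous_apply j).comp (hx.sub hm))

lemma measurable_gaussPdf (d : ℕ) (M : Matrix (Fin d) (Fin d) ℝ) (m : Fin d → ℝ) :
    Measurable (gaussPdf d M m) :=
  ((continuous_gaussPdf d M).comp (Continuous.prodMk_right m)).measurable
open scoped MatrixOrder in
lemma lintegral_gaussPdf (d : ℕ) {M : Matrix (Fin d) (Fin d) ℝ} (hM : M.PosDef) (m : Fin d → ℝ) :
    ∫⁻ x, ENNReal.ofReal (gaussPdf d M m x) = 1 := by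
  have hdet : 0 < M.det := hM.det_pos
  have hshift : ∀ x : Fin d → ℝ, gaussPdf d M m x = gaussPdf d M 0 (x - m) := by
    intro x; unfold gaussPdf; rw [sub_zero]
  simp_rw [hshift]
  rw [lintegral_sub_right_eq_self (fun y => ENNReal.ofReal (gaussPdf d M 0 y)) m]
  -- square root of M
  set S : Matrix (Fin d) (Fin d) ℝ := CFC.sqrt M with hS
  have hSS : S * S = M := CFC.sqrt_mul_sqrt_self M hM.posSemidef.nonneg
  have hSdet2 : S.det * S.det = M.det := by rw [← Matrix.det_mul, hSS]
  have hSdet_ne : S.det ≠ 0 := by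
    intro h; rw [h, zero_mul] at hSdet2; exact hdet.ne' hSdet2.symm
  have hSu : IsUnit S.det := isUnit_iff_ne_zero.mpr hSdet_ne
  have hSsym : Sᵀ = S := (CFC.sqrt_nonneg M).posSemidef.1
  have habs : |S.det| = Real.sqrt M.det := by
    rw [← hSdet2, Real.sqrt_mul_self_eq_abs]
  -- change of variables
  have hmeas : Measurable fun x : Fin d → ℝ => ENNReal.ofReal (gaussPdf d M 0 x) :=
    ENNReal.measurable_ofReal.comp (measurable_gaussPdf d M 0)
  have hmap := Real.map_matrix_volume_pi_eq_smul_volume_pi (M := S) hSdet_ne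
  have key : ∫⁻ y, ENNReal.ofReal (gaussPdf d M 0 (S *ᵥ y)) =
      ENNReal.ofReal |S.det⁻¹| * ∫⁻ x, ENNReal.ofReal (gaussPdf d M 0 x) := by
    have h1 : ∫⁻ y, ENNReal.ofReal (gaussPdf d M 0 (Matrix.toLin' S y)) =
        ∫⁻ x, ENNReal.ofReal (gaussPdf d M 0 x) ∂(Measure.map (Matrix.toLin' S) volume) :=
      (lintegral_map hmeas (Matrix.toLin' S).continuous_of_finiteDimensional.measurable).symm
    simp_rw [Matrix.toLin'_apply] at h1
    rw [h1, hmap, lintegral_smul_measure, smul_eq_mul]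
  -- quadratic form identity
  have hquad : ∀ y : Fin d → ℝ, (S *ᵥ y) ⬝ᵥ (M⁻¹ *ᵥ (S *ᵥ y)) = y ⬝ᵥ y := by
    intro y
    have h1 : M⁻¹ = S⁻¹ * S⁻¹ := by rw [← hSS, Matrix.mul_inv_rev]
    rw [h1, Matrix.mulVec_mulVec, Matrix.mul_assoc, Matrix.nonsing_inv_mul S hSu,
      Matrix.mul_one, Matrix.dotProduct_mulVec, ← Matrix.mulVec_transpose,
      Matrix.transpose_nonsing_inv, hSsym, Matrix.mulVec_mulVec,
      Matrix.nonsing_inv_mul S hSu, Matrix.one_mulVec]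
  -- pointwise formula for the transformed integrand
  set c : ℝ := Real.sqrt ((2 * Real.pi) ^ d * M.det) with hc
  have hpoint : ∀ y : Fin d → ℝ,
      gaussPdf d M 0 (S *ᵥ y) = c⁻¹ * ∏ i, Real.exp (-(1/2) * (y i) ^ 2) := by
    intro y
    unfold gaussPdf
    rw [sub_zero, hquad y, div_eq_inv_mul]
    congr 1
    rw [← Real.exp_sum]
    congr 1
    simp only [dotProduct, Finset.mul_sum]
    congr 1; funext i; ring
  simp_rw [hpoint] at key
  -- compute the integral via Fubini for products
  have hint1 : Integrable (fun t : ℝ => Real.exp (-(1/2 : ℝ) * t ^ 2)) := by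
    simpa using integrable_exp_neg_mul_sq (by norm_num : (0:ℝ) < 1/2)
  have hintd : Integrable (fun y : Fin d → ℝ => ∏ i, Real.exp (-(1/2 : ℝ) * (y i) ^ 2)) :=
    Integrable.fintype_prod (f := fun _ : Fin d => fun t : ℝ => Real.exp (-(1/2 : ℝ) * t ^ 2))
      (fun _ => hint1)
  have hval : ∫ y : Fin d → ℝ, c⁻¹ * ∏ i, Real.exp (-(1/2 : ℝ) * (y i) ^ 2) =
      c⁻¹ * Real.sqrt (2 * Real.pi) ^ d := by
    rw [MeasureTheory.integral_const_mul, MeasureTheory.volume_pi, MeasureTheory.integral_fintype_prod_eq_pow (ι := Fin d)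
      (fun t : ℝ => Real.exp (-(1/2 : ℝ) * t ^ 2))]
    have := integral_gaussian (1/2 : ℝ)
    norm_num at this ⊢
    rw [this]
    norm_num [Fintype.card_fin]
    exact Or.inl (by ring)
  have hlint : ∫⁻ y : Fin d → ℝ, ENNReal.ofReal (c⁻¹ * ∏ i, Real.exp (-(1/2 : ℝ) * (y i) ^ 2)) =
      ENNReal.ofReal (c⁻¹ * Real.sqrt (2 * Real.pi) ^ d) := by
    rw [← hval, ← ofReal_integral_eq_lintegral_ofReal (hintd.const_mul _)]
    exact Filter.Eventually.of_forall fun y =>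
      mul_nonneg (inv_nonneg.mpr (Real.sqrt_nonneg _))
        (Finset.prod_nonneg fun i _ => (Real.exp_pos _).le)
  rw [hlint] at key
  -- conclude
  have hcancel : ENNReal.ofReal |S.det| * ENNReal.ofReal |S.det⁻¹| = 1 := by
    rw [← ENNReal.ofReal_mul (abs_nonneg _), ← abs_mul, mul_inv_cancel₀ hSdet_ne, abs_one,
      ENNReal.ofReal_one]
  have := congrArg (fun z => ENNReal.ofReal |S.det| * z) key
  rw [← mul_assoc, hcancel, one_mul] at this
  rw [← this, ← ENNReal.ofReal_mul (abs_nonneg _), habs]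
  have hcval : c = Real.sqrt (2 * Real.pi) ^ d * Real.sqrt M.det := by
    have hnn : 0 ≤ Real.sqrt (2 * Real.pi) ^ d * Real.sqrt M.det :=
      mul_nonneg (pow_nonneg (Real.sqrt_nonneg _) _) (Real.sqrt_nonneg _)
    rw [hc, show (2 * Real.pi) ^ d * M.det =
        (Real.sqrt (2 * Real.pi) ^ d * Real.sqrt M.det) * (Real.sqrt (2 * Real.pi) ^ d * Real.sqrt M.det) by
          rw [show ∀ a b : ℝ, a * b * (a * b) = (a * a) * (b * b) from fun a b => by ring,
            ← mul_pow, Real.mul_self_sqrt (by positivity : (0:ℝ) ≤ 2 * Real.pi),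
            Real.mul_self_sqrt hdet.le],
      Real.sqrt_mul_self_eq_abs, abs_of_nonneg hnn]
  rw [hcval]
  have hs2pi : 0 < Real.sqrt (2 * Real.pi) ^ d := pow_pos (Real.sqrt_pos.mpr (by positivity)) _
  have hsM : 0 < Real.sqrt M.det := Real.sqrt_pos.mpr hdet
  rw [show Real.sqrt M.det * ((Real.sqrt (2 * Real.pi) ^ d * Real.sqrt M.det)⁻¹ *
      Real.sqrt (2 * Real.pi) ^ d) = 1 by field_simp, ENNReal.ofReal_one]
lemma pcn_detailed_balance (d : ℕ) {C : Matrix (Fin d) (Fin d) ℝ} (hC : C.PosDef)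
    {ρ : ℝ} (hρ : 1 - ρ ^ 2 ≠ 0) (u v : Fin d → ℝ) :
    gaussPdf d C 0 u * gaussPdf d ((1 - ρ ^ 2) • C) (ρ • u) v =
      gaussPdf d C 0 v * gaussPdf d ((1 - ρ ^ 2) • C) (ρ • v) u := by
  have hCd : IsUnit C.det := isUnit_iff_ne_zero.mpr hC.det_pos.ne'
  have : Invertible (1 - ρ ^ 2) := invertibleOfNonzero hρ
  have hinv : ((1 - ρ ^ 2) • C)⁻¹ = (1 - ρ ^ 2)⁻¹ • C⁻¹ := by
    rw [Matrix.inv_smul (A := C) (1 - ρ ^ 2) hCd, invOf_eq_inv (1 - ρ ^ 2)]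
  have hsymm : C⁻¹ᵀ = C⁻¹ := by
    have := hC.1.inv
    simpa [Matrix.IsHermitian, Matrix.conjTranspose_eq_transpose_of_trivial] using this
  have hQ : ∀ a b : Fin d → ℝ, a ⬝ᵥ C⁻¹ *ᵥ b = b ⬝ᵥ C⁻¹ *ᵥ a := by
    intro a b
    rw [Matrix.dotProduct_mulVec, ← Matrix.mulVec_transpose, hsymm, dotProduct_comm]
  unfold gaussPdf
  rw [div_mul_div_comm, div_mul_div_comm, ← Real.exp_add, ← Real.exp_add]
  congr 2
  rw [hinv]
  have expand : ∀ a b : Fin d → ℝ,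
      (b - ρ • a) ⬝ᵥ ((1 - ρ ^ 2)⁻¹ • C⁻¹) *ᵥ (b - ρ • a) =
        (1 - ρ ^ 2)⁻¹ * (b ⬝ᵥ C⁻¹ *ᵥ b - 2 * ρ * (a ⬝ᵥ C⁻¹ *ᵥ b) + ρ ^ 2 * (a ⬝ᵥ C⁻¹ *ᵥ a)) := by
    intro a b
    rw [Matrix.smul_mulVec, dotProduct_smul, smul_eq_mul]
    congr 1
    simp only [Matrix.mulVec_sub, Matrix.mulVec_smul, sub_dotProduct, dotProduct_sub,
      smul_dotProduct, dotProduct_smul, smul_eq_mul]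
    rw [hQ b a]
    ring
  rw [sub_zero, sub_zero, expand, expand, hQ v u]
  field_simp
  ring

set_option maxHeartbeats 1000000 in
/-- The Metropolis–Hastings kernel built from the pCN proposal
`ũ = ρu + √(1-ρ²) N(0,C)` and acceptance probability `min{1, l(ũ)/l(u)}` is reversible
with respect to the posterior `μ` with `dμ/dμ₀ ∝ l`, `μ₀ = N(0,C)`; in particular it is
`μ`-invariant. -/
theorem pcn_metropolis_hastings_reversible
    (d : ℕ) (C : Matrix (Fin d) (Fin d) ℝ) (hC : C.PosDef)
    (ρ : ℝ) (hρ : ρ ∈ Set.Ioo (-1 : ℝ) 1)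
    (l : (Fin d → ℝ) → ℝ) (hl_meas : Measurable l) (hl_pos : ∀ u, 0 < l u)
    (B : ℝ) (hl_bdd : ∀ u, l u ≤ B)
    -- the Gaussian prior `μ₀ = N(0,C)` given by its density w.r.t. Lebesgue measure
    (μ₀ : Measure (Fin d → ℝ))
    (hμ₀ : μ₀ = volume.withDensity (fun u => ENNReal.ofReal (gaussPdf d C 0 u)))
    -- the posterior `μ` with `dμ/dμ₀ ∝ l`
    (μ : Measure (Fin d → ℝ))
    (hμ : μ = (∫⁻ u, ENNReal.ofReal (l u) ∂μ₀)⁻¹ •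
        μ₀.withDensity (fun u => ENNReal.ofReal (l u)))
    -- the pCN proposal kernel `q(u,·) = N(ρu, (1-ρ²)C)`
    (q : Kernel (Fin d → ℝ) (Fin d → ℝ))
    (hq : ∀ u, q u =
        volume.withDensity (fun v => ENNReal.ofReal (gaussPdf d ((1 - ρ ^ 2) • C) (ρ • u) v)))
    -- the Metropolis–Hastings kernel with acceptance probability `α(u,v) = min{1, l(v)/l(u)}`
    (K : Kernel (Fin d → ℝ) (Fin d → ℝ))
    (hK : ∀ u A, MeasurableSet A →
        K u A = (∫⁻ v in A, ENNReal.ofReal (min 1 (l v / l u)) ∂(q u)) +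
          (A.indicator (fun _ => (1 : ℝ≥0∞)) u) *
            (1 - ∫⁻ v, ENNReal.ofReal (min 1 (l v / l u)) ∂(q u))) :
    (∀ f g : (Fin d → ℝ) → ℝ≥0∞, Measurable f → Measurable g →
        ∫⁻ u, f u * ∫⁻ v, g v ∂(K u) ∂μ = ∫⁻ u, g u * ∫⁻ v, f v ∂(K u) ∂μ) ∧
      μ.bind K = μ := by
  obtain ⟨hρ1, hρ2⟩ := hρ
  have hρsq : (0:ℝ) < 1 - ρ ^ 2 := by nlinarith
  have hρne : (1:ℝ) - ρ ^ 2 ≠ 0 := hρsq.ne'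
  have hM : ((1 - ρ ^ 2) • C).PosDef := by
    refine ⟨?_, fun x hx => ?_⟩
    · show ((1 - ρ ^ 2) • C)ᴴ = _
      rw [Matrix.conjTranspose_smul, hC.1.eq]
      simp
    · exact (hC.smul hρsq).2 hx
  -- abbreviations
  set P₀ : (Fin d → ℝ) → ℝ≥0∞ := fun u => ENNReal.ofReal (gaussPdf d C 0 u) with hP₀def
  set L : (Fin d → ℝ) → ℝ≥0∞ := fun u => ENNReal.ofReal (l u) with hLdef
  set P : (Fin d → ℝ) → (Fin d → ℝ) → ℝ≥0∞ :=
    fun u v => ENNReal.ofReal (gaussPdf d ((1 - ρ ^ 2) • C) (ρ • u) v) with hPdef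
  set Acc : (Fin d → ℝ) → (Fin d → ℝ) → ℝ≥0∞ :=
    fun u v => ENNReal.ofReal (min 1 (l v / l u)) with hAdef
  set c : ℝ≥0∞ := (∫⁻ u, L u ∂μ₀)⁻¹ with hcdef
  -- measurability
  have hP₀m : Measurable P₀ := ENNReal.measurable_ofReal.comp
    (continuous_gaussPdf' d C continuous_const continuous_id).measurable
  have hLm : Measurable L := ENNReal.measurable_ofReal.comp hl_meas
  have hPj : Measurable fun p : (Fin d → ℝ) × (Fin d → ℝ) => P p.1 p.2 :=
    ENNReal.measurable_ofReal.comp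
      (continuous_gaussPdf' d ((1 - ρ ^ 2) • C)
        (continuous_fst.const_smul ρ) continuous_snd).measurable
  have hPm : ∀ u, Measurable (P u) := fun u =>
    ENNReal.measurable_ofReal.comp
      (continuous_gaussPdf' d ((1 - ρ ^ 2) • C) continuous_const continuous_id).measurable
  have hAj : Measurable fun p : (Fin d → ℝ) × (Fin d → ℝ) => Acc p.1 p.2 := by
    apply ENNReal.measurable_ofReal.comp
    exact measurable_const.min ((hl_meas.comp measurable_snd).div (hl_meas.comp measurable_fst))
  have hAm : ∀ u, Measurable (Acc u) := fun u =>
    ENNReal.measurable_ofReal.comp (measurable_const.min (hl_meas.div_const (l u)))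
  have hAle : ∀ u v, Acc u v ≤ 1 := fun u v => ENNReal.ofReal_le_one.mpr (min_le_left _ _)
  -- the proposal kernel
  have hqa : ∀ (u : Fin d → ℝ) (g : (Fin d → ℝ) → ℝ≥0∞), Measurable g →
      ∫⁻ v, g v ∂(q u) = ∫⁻ v, P u v * g v ∂volume := by
    intro u g hg
    rw [hq u, lintegral_withDensity_eq_lintegral_mul _ (hPm u) hg]
    rfl
  have hq1 : ∀ u, q u Set.univ = 1 := by
    intro u
    rw [hq u, withDensity_apply _ MeasurableSet.univ, setLIntegral_univ]
    exact lintegral_gaussPdf d hM (ρ • u)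
  set aF : (Fin d → ℝ) → ℝ≥0∞ := fun u => ∫⁻ v, Acc u v ∂(q u) with haFdef
  have haF_le : ∀ u, aF u ≤ 1 := fun u =>
    le_trans (lintegral_mono (hAle u)) (by rw [lintegral_one, hq1 u])
  -- lintegral against K
  have hKlin : ∀ (u : Fin d → ℝ) (g : (Fin d → ℝ) → ℝ≥0∞), Measurable g →
      ∫⁻ v, g v ∂(K u) = (∫⁻ v, Acc u v * g v ∂(q u)) + (1 - aF u) * g u := by
    intro u g hg
    have hKeq : (K u : Measure (Fin d → ℝ)) =
        (q u).withDensity (Acc u) + (1 - aF u) • Measure.dirac u := by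
      ext A hA
      rw [hK u A hA]
      simp only [Measure.coe_add, Pi.add_apply, Measure.smul_apply, smul_eq_mul,
        Measure.dirac_apply' _ hA, withDensity_apply _ hA]
      exact congrArg₂ (· + ·) rfl (mul_comm _ _)
    rw [hKeq, lintegral_add_measure, lintegral_smul_measure, lintegral_dirac' u hg,
      lintegral_withDensity_eq_lintegral_mul _ (hAm u) hg]
    rfl
  have hKuniv : ∀ u, K u Set.univ = 1 := by
    intro u
    have h := hKlin u (fun _ => 1) measurable_const
    simp only [lintegral_one, mul_one] at h
    rw [h]
    have : ∫⁻ v, Acc u v ∂(q u) = aF u := rfl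
    rw [this]
    exact add_tsub_cancel_of_le (haF_le u)
  -- the symmetric joint density
  set S : (Fin d → ℝ) → (Fin d → ℝ) → ℝ≥0∞ :=
    fun u v => P₀ u * P u v * (L u * Acc u v) with hSdef
  have hSsym : ∀ u v, S u v = S v u := by
    intro u v
    have h1 : ∀ w z : Fin d → ℝ, L w * Acc w z = ENNReal.ofReal (min (l w) (l z)) := by
      intro w z
      simp only [hLdef, hAdef]
      rw [← ENNReal.ofReal_mul (hl_pos w).le]
      congr 1
      rw [mul_min_of_nonneg _ _ (hl_pos w).le, mul_one, ← mul_div_assoc,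
        mul_div_cancel_left₀ _ (hl_pos w).ne']
    have h3 : P₀ u * P u v = P₀ v * P v u := by
      simp only [hP₀def, hPdef]
      rw [← ENNReal.ofReal_mul (gaussPdf_nonneg _ _ _ _),
        ← ENNReal.ofReal_mul (gaussPdf_nonneg _ _ _ _),
        pcn_detailed_balance d hC hρne u v]
    simp only [hSdef]
    rw [h1, h1, h3, min_comm]
  -- main expansion
  have hT : ∀ f g : (Fin d → ℝ) → ℝ≥0∞, Measurable f → Measurable g →
      ∫⁻ u, f u * ∫⁻ v, g v ∂(K u) ∂μ =
        c * ∫⁻ u, ∫⁻ v, S u v * (f u * g v) ∂volume ∂volume +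
          ∫⁻ u, (1 - aF u) * (f u * g u) ∂μ := by
    intro f g hf hg
    have hXeq : ∀ u, ∫⁻ v, Acc u v * g v ∂(q u) = ∫⁻ v, P u v * (Acc u v * g v) ∂volume :=
      fun u => hqa u _ ((hAm u).mul hg)
    have hXm : Measurable fun u => ∫⁻ v, P u v * (Acc u v * g v) ∂volume :=
      Measurable.lintegral_prod_right (hPj.mul (hAj.mul (hg.comp measurable_snd)))
    calc ∫⁻ u, f u * ∫⁻ v, g v ∂(K u) ∂μ
        = ∫⁻ u, (f u * ∫⁻ v, P u v * (Acc u v * g v) ∂volume)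
            + (1 - aF u) * (f u * g u) ∂μ := by
          refine lintegral_congr fun u => ?_
          rw [hKlin u g hg, hXeq u, mul_add]
          ring
      _ = (∫⁻ u, f u * ∫⁻ v, P u v * (Acc u v * g v) ∂volume ∂μ)
            + ∫⁻ u, (1 - aF u) * (f u * g u) ∂μ := lintegral_add_left (hf.mul hXm) _
      _ = c * ∫⁻ u, ∫⁻ v, S u v * (f u * g v) ∂volume ∂volume
            + ∫⁻ u, (1 - aF u) * (f u * g u) ∂μ := by
          congr 1
          rw [hμ, hμ₀, lintegral_smul_measure]
          congr 1
          rw [lintegral_withDensity_eq_lintegral_mul _ hLm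
            (show Measurable fun u => f u * ∫⁻ v, P u v * (Acc u v * g v) ∂volume from hf.mul hXm)]
          simp only [Pi.mul_apply]
          rw [lintegral_withDensity_eq_lintegral_mul _ hP₀m
            (show Measurable fun u => L u * (f u * ∫⁻ v, P u v * (Acc u v * g v) ∂volume) from
              hLm.mul (hf.mul hXm))]
          simp only [Pi.mul_apply]
          refine lintegral_congr fun u => ?_
          rw [show P₀ u * (L u * (f u * ∫⁻ v, P u v * (Acc u v * g v) ∂volume)) =
              (P₀ u * L u * f u) * ∫⁻ v, P u v * (Acc u v * g v) ∂volume by ring,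
            ← lintegral_const_mul _
              (show Measurable fun v => P u v * (Acc u v * g v) from (hPm u).mul ((hAm u).mul hg))]
          refine lintegral_congr fun v => ?_
          simp only [hSdef]
          ring
  -- core symmetry
  have hcore : ∀ f g : (Fin d → ℝ) → ℝ≥0∞, Measurable f → Measurable g →
      ∫⁻ u, ∫⁻ v, S u v * (f u * g v) ∂volume ∂volume =
        ∫⁻ u, ∫⁻ v, S u v * (g u * f v) ∂volume ∂volume := by
    intro f g hf hg
    have hSjm : Measurable fun p : (Fin d → ℝ) × (Fin d → ℝ) => S p.2 p.1 := by
      simp only [hSdef]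
      exact ((hP₀m.comp measurable_snd).mul
          (hPj.comp (measurable_snd.prodMk measurable_fst))).mul
        ((hLm.comp measurable_snd).mul (hAj.comp (measurable_snd.prodMk measurable_fst)))
    have hmeas : AEMeasurable (fun p : (Fin d → ℝ) × (Fin d → ℝ) =>
        S p.2 p.1 * (g p.2 * f p.1)) (volume.prod volume) :=
      (hSjm.mul ((hg.comp measurable_snd).mul (hf.comp measurable_fst))).aemeasurable
    calc ∫⁻ u, ∫⁻ v, S u v * (f u * g v) ∂volume ∂volume
        = ∫⁻ u, ∫⁻ v, S v u * (g v * f u) ∂volume ∂volume := by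
          refine lintegral_congr fun u => lintegral_congr fun v => ?_
          rw [hSsym u v]; ring
      _ = ∫⁻ v, ∫⁻ u, S v u * (g v * f u) ∂volume ∂volume :=
          lintegral_lintegral_swap hmeas
      _ = ∫⁻ u, ∫⁻ v, S u v * (g u * f v) ∂volume ∂volume := rfl
  -- reversibility
  have hrev : ∀ f g : (Fin d → ℝ) → ℝ≥0∞, Measurable f → Measurable g →
      ∫⁻ u, f u * ∫⁻ v, g v ∂(K u) ∂μ = ∫⁻ u, g u * ∫⁻ v, f v ∂(K u) ∂μ := by
    intro f g hf hg
    rw [hT f g hf hg, hT g f hg hf, hcore f g hf hg]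
    congr 1
    exact lintegral_congr fun u => by ring
  refine ⟨hrev, ?_⟩
  -- invariance
  ext A hA
  rw [Measure.bind_apply hA (Kernel.measurable K).aemeasurable]
  have h1 : ∀ u : Fin d → ℝ, (K u) A = ∫⁻ v, A.indicator (fun _ => (1:ℝ≥0∞)) v ∂(K u) := by
    intro u
    rw [lintegral_indicator hA, setLIntegral_one]
  calc ∫⁻ u, K u A ∂μ
      = ∫⁻ u, (fun _ : Fin d → ℝ => (1:ℝ≥0∞)) u
          * ∫⁻ v, A.indicator (fun _ => (1:ℝ≥0∞)) v ∂(K u) ∂μ := by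
        refine lintegral_congr fun u => ?_
        rw [one_mul, h1 u]
    _ = ∫⁻ u, A.indicator (fun _ => (1:ℝ≥0∞)) u
          * ∫⁻ v, (fun _ : Fin d → ℝ => (1:ℝ≥0∞)) v ∂(K u) ∂μ :=
        hrev (fun _ => 1) (A.indicator fun _ => 1) measurable_const
          (measurable_const.indicator hA)
    _ = ∫⁻ u, A.indicator (fun _ => (1:ℝ≥0∞)) u ∂μ := by
        refine lintegral_congr fun u => ?_
        rw [lintegral_one, hKuniv u, mul_one]
    _ = μ A := by rw [lintegral_indicator hA, setLIntegral_one]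
end
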